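/- arXiv:2306.17729 — 2 statements merged into one kernel-verified Lean document; each statement's English description precedes it below -/
import Mathlib

section
/- Let G be a group with a central subgroup C isomorphic to ℤ such that the quotient G/C is abelian of rank at most one (i.e., any two elements of G/C have commensurable powers lying in a common cyclic subgroup; equivalently every finitely generated subgroup of G/C has rank at most one). Then G is abelian. -/
private lemma aux_pow {G : Type*} [Group G] {a b c : G} (hc : ∀ g : G, c * g = g * c)
    (h : a * b = c * (b * a)) : ∀ m : ℤ, a ^ m * b = c ^ m * (b * a ^ m) := by
  have hcinv : ∀ g : G, c⁻¹ * g = g * c⁻¹ := fun g => by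
    calc c⁻¹ * g = c⁻¹ * (g * c) * c⁻¹ := by group
      _ = c⁻¹ * (c * g) * c⁻¹ := by rw [← hc g]
      _ = g * c⁻¹ := by group
  have ha : a⁻¹ * b = c⁻¹ * (b * a⁻¹) := by
    have h1 : b * a⁻¹ = c * (a⁻¹ * b) := by
      calc b * a⁻¹ = a⁻¹ * (a * b) * a⁻¹ := by group
        _ = a⁻¹ * (c * (b * a)) * a⁻¹ := by rw [h]
        _ = (a⁻¹ * c) * b := by group
        _ = (c * a⁻¹) * b := by rw [← hc a⁻¹]
        _ = c * (a⁻¹ * b) := by rw [mul_assoc]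
    rw [h1]; group
  intro m
  induction m using Int.induction_on with
  | zero => simp
  | succ k ih =>
      calc a ^ ((k : ℤ) + 1) * b = a ^ (k : ℤ) * (a * b) := by rw [zpow_add_one, mul_assoc]
        _ = a ^ (k : ℤ) * (c * (b * a)) := by rw [h]
        _ = c * ((a ^ (k : ℤ) * b) * a) := by rw [← mul_assoc, ← hc (a ^ (k : ℤ))]; group
        _ = c * ((c ^ (k : ℤ) * (b * a ^ (k : ℤ))) * a) := by rw [ih]
        _ = c ^ ((k : ℤ) + 1) * (b * a ^ ((k : ℤ) + 1)) := by
            rw [zpow_add_one c, zpow_add_one a]; group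
  | pred k ih =>
      calc a ^ ((-k : ℤ) - 1) * b = a ^ (-k : ℤ) * (a⁻¹ * b) := by rw [zpow_sub_one, mul_assoc]
        _ = a ^ (-k : ℤ) * (c⁻¹ * (b * a⁻¹)) := by rw [ha]
        _ = c⁻¹ * ((a ^ (-k : ℤ) * b) * a⁻¹) := by
            rw [← mul_assoc, ← hcinv (a ^ (-k : ℤ))]; group
        _ = c⁻¹ * ((c ^ (-k : ℤ) * (b * a ^ (-k : ℤ))) * a⁻¹) := by rw [ih]
        _ = c ^ ((-k : ℤ) - 1) * (b * a ^ ((-k : ℤ) - 1)) := by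
            rw [zpow_sub_one c, zpow_sub_one a]; group

/-- If `G` is a group with a central subgroup `C` isomorphic to `ℤ`
such that the quotient `G/C` is abelian of rank at most one (expressed here, equivalently,
by pulling the conditions on `G/C` back to `G`: all commutators lie in `C`, and for any
`a b : G` there are integers `m n`, not both zero, with `a^m ≡ b^n mod C`),
then `G` is abelian. -/
theorem stmt_0 {G : Type*} [Group G] (C : Subgroup G)
    (hcentral : C ≤ Subgroup.center G)
    (hiso : Nonempty (C ≃* Multiplicative ℤ))
    (habelian : ∀ a b : G, a * b * a⁻¹ * b⁻¹ ∈ C)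
    (hrank : ∀ a b : G, ∃ m n : ℤ, (m ≠ 0 ∨ n ≠ 0) ∧ a ^ m * (b ^ n)⁻¹ ∈ C) :
    ∀ a b : G, a * b = b * a := by
  obtain ⟨e⟩ := hiso
  have tf : ∀ c : G, c ∈ C → ∀ k : ℤ, k ≠ 0 → c ^ k = 1 → c = 1 := by
    intro c hcC k hk hck
    have hx : (⟨c, hcC⟩ : C) ^ k = 1 := by ext; simpa using hck
    have h1 : (e ⟨c, hcC⟩) ^ k = 1 := by rw [← map_zpow, hx, map_one]
    have h0 : k • Multiplicative.toAdd (e ⟨c, hcC⟩) = 0 := by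
      simpa using congrArg Multiplicative.toAdd h1
    have h2 : Multiplicative.toAdd (e ⟨c, hcC⟩) = 0 := by
      rcases smul_eq_zero.mp h0 with h | h
      · exact absurd h hk
      · exact h
    have h3 : e ⟨c, hcC⟩ = 1 := by simpa using congrArg Multiplicative.ofAdd h2
    exact congrArg Subtype.val (e.injective (h3.trans (map_one e).symm))
  intro a b
  set c := a * b * a⁻¹ * b⁻¹ with hcdef
  have hcC : c ∈ C := habelian a b
  have hc : ∀ g : G, c * g = g * c := fun g =>
    (Subgroup.mem_center_iff.mp (hcentral hcC) g).symm
  have hrel : a * b = c * (b * a) := by rw [hcdef]; group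
  suffices hc1 : c = 1 by rw [hrel, hc1, one_mul]
  obtain ⟨m, n, hmn, hz⟩ := hrank a b
  set z := a ^ m * (b ^ n)⁻¹ with hzdef
  have hzc : ∀ g : G, z * g = g * z := fun g =>
    (Subgroup.mem_center_iff.mp (hcentral hz) g).symm
  rcases hmn with hm | hn
  · have hmain := aux_pow hc hrel m
    have hcomm : a ^ m * b = b * a ^ m := by
      have ham : a ^ m = z * b ^ n := by rw [hzdef]; group
      rw [ham, mul_assoc, show b ^ n * b = b * b ^ n from (Commute.self_zpow b n).symm.eq,
        ← mul_assoc, hzc b, mul_assoc]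
    rw [hcomm] at hmain
    exact tf c hcC m hm (right_eq_mul.mp hmain)
  · have hc' : ∀ g : G, c⁻¹ * g = g * c⁻¹ := fun g => by
      calc c⁻¹ * g = c⁻¹ * (g * c) * c⁻¹ := by group
        _ = c⁻¹ * (c * g) * c⁻¹ := by rw [← hc g]
        _ = g * c⁻¹ := by group
    have hrel' : b * a = c⁻¹ * (a * b) := by rw [hcdef]; group
    have hmain' := aux_pow hc' hrel' n
    have hz'c : ∀ g : G, z⁻¹ * g = g * z⁻¹ := fun g => by
      calc z⁻¹ * g = z⁻¹ * (g * z) * z⁻¹ := by group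
        _ = z⁻¹ * (z * g) * z⁻¹ := by rw [← hzc g]
        _ = g * z⁻¹ := by group
    have hcomm : b ^ n * a = a * b ^ n := by
      have hbn : b ^ n = z⁻¹ * a ^ m := by rw [hzdef]; group
      rw [hbn, mul_assoc, show a ^ m * a = a * a ^ m from (Commute.self_zpow a m).symm.eq,
        ← mul_assoc, hz'c a, mul_assoc]
    rw [hcomm] at hmain'
    have hcn : c⁻¹ = 1 := tf c⁻¹ (inv_mem hcC) n hn (right_eq_mul.mp hmain')
    simpa using congrArg (·⁻¹) hcn
end

section
/- Let G be a group, N a central subgroup isomorphic to ℤ, and Q = G/N. If Q is a surface group π₁(Σ_g) with g ≥ 2 (or more generally any group all of whose abelian subgroups are cyclic of rank at most one), and if elements δ, β ∈ G satisfy βδβ⁻¹ = δcᵏ where c generates N, then k = 0. -/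
/-- Let `N` be a central subgroup of `G` isomorphic to `ℤ`, generated by an
infinite-order element `c`, and suppose every abelian subgroup of `Q = G/N` has rank at most one
(expressed by pulling back to `G`: whenever `a, b` commute modulo `N` there are `m n`, not both
zero, with `a^m ≡ b^n mod N`). If `β δ β⁻¹ = δ cᵏ`, then `k = 0`. -/
theorem stmt_7 {G : Type*} [Group G] (N : Subgroup G) (c : G)
    (hcentral : N ≤ Subgroup.center G)
    (hgen : Subgroup.zpowers c = N)
    (hinf : ∀ n : ℤ, n ≠ 0 → c ^ n ≠ 1)
    (hrank : ∀ a b : G, a * b * a⁻¹ * b⁻¹ ∈ N →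
      ∃ m n : ℤ, (m ≠ 0 ∨ n ≠ 0) ∧ a ^ m * (b ^ n)⁻¹ ∈ N)
    (δ β : G) (k : ℤ)
    (hconj : β * δ * β⁻¹ = δ * c ^ k) :
    k = 0 := by
  have hcN : c ∈ N := hgen ▸ Subgroup.mem_zpowers c
  have hcen : ∀ g : G, Commute c g :=
    fun g => (Subgroup.mem_center_iff.mp (hcentral hcN) g).symm
  -- β and δ commute mod N
  have hmemN : β * δ * β⁻¹ * δ⁻¹ ∈ N := by
    have h : β * δ * β⁻¹ * δ⁻¹ = c ^ k := by
      rw [hconj, mul_assoc, ((hcen δ⁻¹).zpow_left k).eq]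
      group
    rw [h]; exact Subgroup.zpow_mem N hcN k
  obtain ⟨m, n, hmn, hmem⟩ := hrank β δ hmemN
  obtain ⟨t, ht⟩ := (hgen ▸ hmem : β ^ m * (δ ^ n)⁻¹ ∈ Subgroup.zpowers c)
  have hβm : β ^ m = c ^ t * δ ^ n := by
    have ht' : c ^ t = β ^ m * (δ ^ n)⁻¹ := ht
    rw [ht']; group
  -- key: conjugation of δ^n by β, and of β^m by δ⁻¹
  have h1 : (MulAut.conj β) δ = δ * c ^ k := by
    simpa [MulAut.conj_apply] using hconj
  have hδn : β * δ ^ n * β⁻¹ = δ ^ n * c ^ (k * n) := by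
    have h2 : (MulAut.conj β) (δ ^ n) = (δ * c ^ k) ^ n := by rw [map_zpow, h1]
    have h3 : (δ * c ^ k) ^ n = δ ^ n * (c ^ k) ^ n := ((hcen δ).symm.zpow_right k).mul_zpow n
    have := h2.trans h3
    simpa [MulAut.conj_apply, ← zpow_mul] using this
  have hβrel : δ⁻¹ * β * δ = β * c ^ k := by
    have : β * δ = δ * c ^ k * β := by
      rw [← hconj]; group
    calc δ⁻¹ * β * δ = δ⁻¹ * (β * δ) := by group
      _ = δ⁻¹ * (δ * c ^ k * β) := by rw [this]
      _ = c ^ k * β := by group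
      _ = β * c ^ k := ((hcen β).zpow_left k).eq
  have hβm' : δ⁻¹ * β ^ m * δ = β ^ m * c ^ (k * m) := by
    have h1' : (MulAut.conj δ⁻¹) β = β * c ^ k := by
      simpa [MulAut.conj_apply] using hβrel
    have h2 : (MulAut.conj δ⁻¹) (β ^ m) = (β * c ^ k) ^ m := by rw [map_zpow, h1']
    have h3 : (β * c ^ k) ^ m = β ^ m * (c ^ k) ^ m := ((hcen β).symm.zpow_right k).mul_zpow m
    have := h2.trans h3
    simpa [MulAut.conj_apply, ← zpow_mul] using this
  rcases hmn with hm | hn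
  · -- β^m = c^t δ^n commutes with δ
    have hcomm : δ⁻¹ * β ^ m * δ = β ^ m := by
      rw [hβm]
      have : Commute δ (c ^ t * δ ^ n) :=
        Commute.mul_right ((hcen δ).symm.zpow_right t) ((Commute.refl δ).zpow_right n)
      calc δ⁻¹ * (c ^ t * δ ^ n) * δ = δ⁻¹ * ((c ^ t * δ ^ n) * δ) := by group
        _ = δ⁻¹ * (δ * (c ^ t * δ ^ n)) := by rw [← this.eq]
        _ = c ^ t * δ ^ n := by group
    have hck : c ^ (k * m) = 1 := by
      have := hβm'.symm.trans hcomm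
      exact mul_eq_left.mp this
    have hkm : k * m = 0 := by
      by_contra h; exact hinf _ h hck
    rcases mul_eq_zero.mp hkm with h | h
    · exact h
    · exact absurd h hm
  · -- δ^n = c^(-t) β^m commutes with β
    have hδn' : δ ^ n = c ^ (-t) * β ^ m := by
      rw [hβm]; group
    have hcomm : β * δ ^ n * β⁻¹ = δ ^ n := by
      rw [hδn']
      calc β * (c ^ (-t) * β ^ m) * β⁻¹ = c ^ (-t) * (β * β ^ m * β⁻¹) := by
            rw [← mul_assoc, ← ((hcen β).zpow_left (-t)).eq]; group
        _ = c ^ (-t) * β ^ m := by group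
    have hck : c ^ (k * n) = 1 := by
      have := hδn.symm.trans hcomm
      exact mul_eq_left.mp this
    have hkn : k * n = 0 := by
      by_contra h; exact hinf _ h hck
    rcases mul_eq_zero.mp hkn with h | h
    · exact h
    · exact absurd h hn
end
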